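/- (Terminating reduction) For natural number n, complex a, b, c, d with a not an integer, d not a nonpositive integer, and z a complex number, ₃F₂(a, b, c; a - n, d; z) = (1/(1-a)_n) · ∑_{p=0}^{n} (-z)^p · C(n,p) · (1-a)_{n-p} · ((b)_p (c)_p / (d)_p) · ₂F₁(b+p, c+p; d+p; z), provided all series converge (e.g. |z| < 1). -/

import Mathlib

open Complex Finset Filter Topology

/-- Pochhammer symbol `(x)_k = x (x+1) ⋯ (x+k-1)`. -/
noncomputable def poch (x : ℂ) (k : ℕ) : ℂ := ∏ i ∈ Finset.range k, (x + i)

/-- Beta function `B(x,y) = Γ(x) Γ(y) / Γ(x+y)`. -/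
noncomputable def cBeta (x y : ℂ) : ℂ :=
  Complex.Gamma x * Complex.Gamma y / Complex.Gamma (x + y)

lemma poch_succ (x : ℂ) (k : ℕ) : poch x (k+1) = poch x k * (x + k) := by
  simp [poch, Finset.prod_range_succ]

lemma poch_add (x : ℂ) (p q : ℕ) : poch x (p + q) = poch x p * poch (x + p) q := by
  rw [poch, poch, poch, Finset.prod_range_add]
  congr 1
  apply Finset.prod_congr rfl
  intro i _
  push_cast
  ring

lemma poch_ne_zero {x : ℂ} (hx : ∀ i : ℕ, x + i ≠ 0) (k : ℕ) : poch x k ≠ 0 := by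
  rw [poch]; exact Finset.prod_ne_zero_iff.mpr fun i _ => hx i

lemma poch_reflect (x : ℂ) (m : ℕ) : poch (1 - x) m = (-1)^m * poch (x - m) m := by
  rw [poch, poch, ← Finset.prod_range_reflect]
  rw [show ((-1:ℂ))^m = ∏ i ∈ Finset.range m, (-1:ℂ) by simp, ← Finset.prod_mul_distrib]
  apply Finset.prod_congr rfl
  intro i hi
  simp only [Finset.mem_range] at hi
  have : (↑(m - 1 - i) : ℂ) = (m:ℂ) - 1 - i := by
    have h1 : i ≤ m - 1 := by omega
    have h2 : ((m - 1 - i : ℕ) : ℂ) = ((m-1:ℕ):ℂ) - i := by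
      push_cast [Nat.cast_sub h1]; ring
    rw [h2]
    have h3 : ((m-1:ℕ):ℂ) = (m:ℂ) - 1 := by
      have : 1 ≤ m := by omega
      push_cast [Nat.cast_sub this]; ring
    rw [h3]
  rw [this]; ring

lemma poch_neg_nat (m p : ℕ) : poch (-(m:ℂ)) p = (-1)^p * (m.descFactorial p : ℂ) := by
  induction p with
  | zero => simp [poch]
  | succ p ih =>
    rw [poch_succ, ih, Nat.descFactorial_succ]
    rcases le_or_gt p m with h | h
    · have hc : ((m - p : ℕ):ℂ) = (m:ℂ) - p := by push_cast [Nat.cast_sub h]; ring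
      push_cast [hc]
      ring
    · rw [Nat.descFactorial_eq_zero_iff_lt.mpr h]
      push_cast
      ring

lemma poch_vandermonde (x y : ℂ) (n : ℕ) :
    poch (x + y) n = ∑ p ∈ Finset.range (n+1), (n.choose p : ℂ) * poch x p * poch y (n - p) := by
  induction n with
  | zero => simp [poch]
  | succ n ih =>
    have key : ∀ p ∈ Finset.range (n+1), (n.choose p : ℂ) * poch x p * poch y (n - p) * (x + y + n)
        = (n.choose p : ℂ) * poch x (p+1) * poch y (n - p)
          + (n.choose p : ℂ) * poch x p * poch y (n + 1 - p) := by
      intro p hp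
      simp only [Finset.mem_range] at hp
      have hp' : p ≤ n := by omega
      have hc : (↑p : ℂ) + ↑(n - p) = (n : ℂ) := by
        rw [← Nat.cast_add, Nat.add_sub_cancel' hp']
      have h1 : n + 1 - p = (n - p) + 1 := by omega
      rw [h1, poch_succ, poch_succ]
      linear_combination (-(n.choose p : ℂ) * poch x p * poch y (n - p)) * hc
    calc poch (x + y) (n+1)
        = (∑ p ∈ Finset.range (n+1), (n.choose p : ℂ) * poch x p * poch y (n - p)) * (x+y+n) := by
          rw [poch_succ, ih]
      _ = ∑ p ∈ Finset.range (n+1), ((n.choose p : ℂ) * poch x (p+1) * poch y (n - p)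
            + (n.choose p : ℂ) * poch x p * poch y (n + 1 - p)) := by
          rw [Finset.sum_mul]; exact Finset.sum_congr rfl key
      _ = (∑ p ∈ Finset.range (n+1), (n.choose p : ℂ) * poch x (p+1) * poch y (n - p))
            + ∑ p ∈ Finset.range (n+1), (n.choose p : ℂ) * poch x p * poch y (n + 1 - p) :=
          Finset.sum_add_distrib
      _ = ∑ p ∈ Finset.range (n+1+1), ((n+1).choose p : ℂ) * poch x p * poch y (n + 1 - p) := by
          rw [Finset.sum_range_succ' (fun p => ((n+1).choose p : ℂ) * poch x p * poch y (n + 1 - p)) (n+1)]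
          simp only [Nat.choose_succ_succ, Nat.cast_add, add_mul, Nat.succ_sub_succ]
          rw [Finset.sum_add_distrib, add_assoc]
          congr 1
          rw [Finset.sum_range_succ (fun q => (n.choose (q+1) : ℂ) * poch x (q+1) * poch y (n - q)) n]
          simp only [Nat.choose_succ_self, Nat.cast_zero, zero_mul, add_zero]
          rw [Finset.sum_range_succ' (fun p => (n.choose p : ℂ) * poch x p * poch y (n + 1 - p)) n]
          simp [Nat.succ_sub_succ, poch]

lemma poch_keyA (a : ℂ) (n m : ℕ) :
    poch (1 - a - m) n * poch (a - n) m = poch (1 - a) n * poch a m := by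
  have h1 : poch (1 - a) n = (-1)^n * poch (a - n) n := poch_reflect a n
  have h2 : poch (1 - a - m) n = (-1)^n * poch (a + m - n) n := by
    have h := poch_reflect (a + m) n
    rw [show (1:ℂ) - (a+m) = 1 - a - m by ring] at h
    exact h
  have e1 : poch (a - n) (m + n) = poch (a - n) m * poch (a - n + m) n := poch_add _ _ _
  have e2 : poch (a - n) (n + m) = poch (a - n) n * poch (a - n + n) m := poch_add _ _ _
  rw [Nat.add_comm m n] at e1
  rw [show a - n + n = a by ring] at e2
  rw [show a - (n:ℂ) + m = a + m - n by ring] at e1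
  rw [h1, h2]
  rw [e1] at e2
  linear_combination ((-1:ℂ))^n * e2

lemma ratio_tendsto (u v w : ℂ) (z : ℂ) :
    Tendsto (fun k : ℕ => ‖(u + k) / ((k:ℂ) + 1) * ((v + k) / (w + k)) * z‖) atTop (𝓝 ‖z‖) := by
  have h1 : Tendsto (fun k : ℕ => (u + k) / ((k : ℂ) + 1)) atTop (𝓝 1) := by
    have h0 : Tendsto (fun k : ℕ => (u - 1) / ((k : ℂ) + 1)) atTop (𝓝 0) := by
      rw [tendsto_zero_iff_norm_tendsto_zero]
      simp only [norm_div]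
      apply Tendsto.div_atTop tendsto_const_nhds
      apply tendsto_atTop_mono (fun k : ℕ => ?_) (tendsto_natCast_atTop_atTop (R := ℝ))
      have hk : ‖(k:ℂ)+1‖ = (k:ℝ)+1 := by
        rw [show (k:ℂ)+1 = ((k+1:ℕ):ℂ) by push_cast; ring, RCLike.norm_natCast]
        push_cast; ring
      rw [hk]; linarith
    have h := h0.add (tendsto_const_nhds (x := (1:ℂ)))
    simp only [zero_add] at h
    apply h.congr
    intro k
    have hk : ((k:ℂ)+1) ≠ 0 := Nat.cast_add_one_ne_zero k
    field_simp
    ring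
  have hw : Tendsto (fun k : ℕ => ‖w + (k:ℂ)‖) atTop atTop := by
    apply tendsto_atTop_mono (fun k : ℕ => ?_)
      (tendsto_atTop_add_const_right atTop (-‖w‖) (tendsto_natCast_atTop_atTop (R := ℝ)))
    have h := norm_sub_norm_le ((k:ℂ)) (-w)
    simp only [sub_neg_eq_add, norm_neg] at h
    have hk : ‖(k:ℂ)‖ = (k:ℝ) := by simp
    rw [hk] at h
    calc (k:ℝ) + -‖w‖ ≤ ‖(k:ℂ) + w‖ := by linarith
      _ = ‖w + (k:ℂ)‖ := by rw [add_comm]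
  have h2 : Tendsto (fun k : ℕ => (v + k) / (w + (k : ℂ))) atTop (𝓝 1) := by
    have h0 : Tendsto (fun k : ℕ => (v - w) / (w + (k : ℂ))) atTop (𝓝 0) := by
      rw [tendsto_zero_iff_norm_tendsto_zero]
      simp only [norm_div]
      exact Tendsto.div_atTop tendsto_const_nhds hw
    have h := h0.add (tendsto_const_nhds (x := (1:ℂ)))
    simp only [zero_add] at h
    apply h.congr'
    filter_upwards [hw.eventually_gt_atTop 0] with k hk
    have hne : w + (k:ℂ) ≠ 0 := by
      intro hh; rw [hh] at hk; simp at hk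
    field_simp
    ring
  have h := (h1.mul h2).mul (tendsto_const_nhds (x := z))
  simp only [one_mul] at h
  exact h.norm

lemma summable_hyp (u v w z : ℂ) (hw : ∀ k : ℕ, poch w k ≠ 0) (hz : ‖z‖ < 1) :
    Summable (fun k : ℕ => poch u k * poch v k / (poch w k * (k.factorial : ℂ)) * z ^ k) := by
  set f : ℕ → ℂ := fun k => poch u k * poch v k / (poch w k * (k.factorial : ℂ)) * z ^ k with hf
  have hden : ∀ k : ℕ, poch w k * (k.factorial : ℂ) ≠ 0 := fun k =>
    mul_ne_zero (hw k) (by exact_mod_cast Nat.factorial_ne_zero k)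
  by_cases hnz : ∀ k, f k ≠ 0
  · apply summable_of_ratio_test_tendsto_lt_one hz (Eventually.of_forall hnz)
    have hr : ∀ k : ℕ, ‖f (k+1)‖ / ‖f k‖ = ‖(u + k) / ((k:ℂ) + 1) * ((v + k) / (w + k)) * z‖ := by
      intro k
      have hwk : (w + (k:ℂ)) ≠ 0 := by
        intro h
        apply hw (k+1)
        rw [poch_succ, h, mul_zero]
      have hk1 : ((k:ℂ) + 1) ≠ 0 := Nat.cast_add_one_ne_zero k
      have hstep : f (k+1) = ((u + k) / ((k:ℂ) + 1) * ((v + k) / (w + k)) * z) * f k := by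
        rw [hf]
        simp only
        rw [poch_succ u, poch_succ v, poch_succ w, Nat.factorial_succ, pow_succ]
        push_cast
        field_simp
      rw [hstep, norm_mul, mul_div_assoc, div_self (norm_ne_zero_iff.mpr (hnz k)), mul_one]
    exact (ratio_tendsto u v w z).congr (fun k => (hr k).symm)
  · push_neg at hnz
    obtain ⟨k0, hk0⟩ := hnz
    apply summable_of_ne_finset_zero (s := Finset.range (k0+1))
    intro k hk
    simp only [Finset.mem_range, not_lt] at hk
    have hfk : ∀ m : ℕ, f m = poch u m * poch v m * z ^ m / (poch w m * (m.factorial : ℂ)) := by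
      intro m; rw [hf]; simp only; ring
    have hknum : poch u k0 * poch v k0 * z ^ k0 = 0 := by
      rw [hfk k0] at hk0
      exact (div_eq_zero_iff.1 hk0).resolve_right (hden k0)
    have hzero : poch u k * poch v k * z ^ k = 0 := by
      have hdecomp : k = k0 + (k - k0) := by omega
      rw [hdecomp, poch_add u, poch_add v, pow_add]
      calc poch u k0 * poch (u + k0) (k - k0) * (poch v k0 * poch (v + k0) (k - k0)) *
            (z ^ k0 * z ^ (k - k0))
          = (poch u k0 * poch v k0 * z ^ k0) *
            (poch (u + k0) (k - k0) * poch (v + k0) (k - k0) * z ^ (k - k0)) := by ring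
        _ = 0 := by rw [hknum, zero_mul]
    rw [hfk k, hzero, zero_div]

noncomputable def hypS (b c d z : ℂ) (p k : ℕ) : ℂ :=
  poch (b + p) k * poch (c + p) k / (poch (d + p) k * (k.factorial : ℂ)) * z ^ k

noncomputable def hypA (a b c d z : ℂ) (n p : ℕ) : ℂ :=
  (-z) ^ p * (n.choose p : ℂ) * poch (1 - a) (n - p) * (poch b p * poch c p / poch d p)

noncomputable def hypF (a b c d z : ℂ) (n p m : ℕ) : ℂ :=
  if p ≤ m then hypA a b c d z n p * hypS b c d z p (m - p) else 0

theorem threeF2_terminating_reduction (n : ℕ) (a b c d z : ℂ)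
    (ha : ∀ k : ℤ, a ≠ k) (hd : ∀ k : ℕ, d ≠ -(k : ℂ)) (hz : ‖z‖ < 1) :
    ∑' k : ℕ, poch a k * poch b k * poch c k /
        (poch (a - n) k * poch d k * (Nat.factorial k : ℂ)) * z ^ k =
      (1 / poch (1 - a) n) *
        ∑ p ∈ Finset.range (n + 1), (-z) ^ p * (n.choose p : ℂ) * poch (1 - a) (n - p) *
          (poch b p * poch c p / poch d p) *
          ∑' k : ℕ, poch (b + p) k * poch (c + p) k /
            (poch (d + p) k * (Nat.factorial k : ℂ)) * z ^ k := by
  -- nonvanishing facts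
  have hP : poch (1 - a) n ≠ 0 := by
    apply poch_ne_zero
    intro i h
    apply ha (1 + i)
    push_cast
    linear_combination -h
  have han : ∀ m : ℕ, poch (a - n) m ≠ 0 := by
    intro m
    apply poch_ne_zero
    intro i h
    apply ha ((n : ℤ) - i)
    push_cast
    linear_combination h
  have hdp : ∀ p : ℕ, ∀ k : ℕ, poch (d + p) k ≠ 0 := by
    intro p
    apply poch_ne_zero
    intro i h
    apply hd (p + i)
    push_cast
    linear_combination h
  have hdm : ∀ m : ℕ, poch d m ≠ 0 := by
    intro m
    have := hdp 0 m
    simpa using this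
  -- summability of the Gauss series
  have hS : ∀ p : ℕ, Summable (fun k => hypS b c d z p k) := by
    intro p
    exact summable_hyp (b + p) (c + p) (d + p) z (hdp p) hz
  -- summability of shifted terms
  have hFshift : ∀ p : ℕ, ∀ k : ℕ,
      hypF a b c d z n p (k + p) = hypA a b c d z n p * hypS b c d z p k := by
    intro p k
    simp [hypF, Nat.le_add_left, Nat.add_sub_cancel]
  have hFsum : ∀ p : ℕ, Summable (hypF a b c d z n p) := by
    intro p
    rw [← summable_nat_add_iff p]
    exact (((hS p).mul_left (hypA a b c d z n p)).congr (fun k => (hFshift p k).symm))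
  -- the shift identity
  have hshift : ∀ p : ℕ, ∑' (m : ℕ), hypF a b c d z n p m
      = hypA a b c d z n p * ∑' (k : ℕ), hypS b c d z p k := by
    intro p
    have hinj : Function.Injective (fun k : ℕ => k + p) := add_left_injective p
    have hsupp : Function.support (hypF a b c d z n p) ⊆ Set.range (fun k : ℕ => k + p) := by
      intro m hm
      simp only [Function.mem_support] at hm
      by_contra hc
      apply hm
      have hnle : ¬ p ≤ m := by
        intro hle
        exact hc ⟨m - p, by show m - p + p = m; omega⟩
      simp [hypF, hnle]
    rw [← Function.Injective.tsum_eq hinj hsupp]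
    rw [tsum_congr (hFshift p), tsum_mul_left]
  -- the per-term identity
  have key : ∀ m : ℕ, poch a m * poch b m * poch c m /
      (poch (a - n) m * poch d m * (Nat.factorial m : ℂ)) * z ^ m
      = (poch (1 - a) n)⁻¹ * ∑ p ∈ Finset.range (n + 1), hypF a b c d z n p m := by
    intro m
    have hterm : ∀ p ∈ Finset.range (n + 1), hypF a b c d z n p m
        = (poch b m * poch c m / (poch d m * (Nat.factorial m : ℂ)) * z ^ m) *
          ((n.choose p : ℂ) * poch (1 - a) (n - p) * poch (-(m:ℂ)) p) := by
      intro p _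
      by_cases hpm : p ≤ m
      · rw [hypF, if_pos hpm, hypA, hypS]
        have hb : poch b m = poch b p * poch (b + p) (m - p) := by
          rw [← poch_add]; congr 1; omega
        have hc : poch c m = poch c p * poch (c + p) (m - p) := by
          rw [← poch_add]; congr 1; omega
        have hdd : poch d m = poch d p * poch (d + p) (m - p) := by
          rw [← poch_add]; congr 1; omega
        have hfac : (Nat.factorial m : ℂ)
            = ((m - p).factorial : ℂ) * (m.descFactorial p : ℂ) := by
          exact_mod_cast (congrArg (Nat.cast (R := ℂ)) (Nat.factorial_mul_descFactorial hpm)).symm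
        have hzz : z ^ m = z ^ p * z ^ (m - p) := by
          rw [← pow_add]; congr 1; omega
        have hnegz : (-z) ^ p = (-1) ^ p * z ^ p := by
          rw [neg_pow]
        have hpn : poch (-(m:ℂ)) p = (-1)^p * (m.descFactorial p : ℂ) := poch_neg_nat m p
        rw [hb, hc, hdd, hfac, hzz, hnegz, hpn]
        have h1 : poch d p ≠ 0 := hdm p
        have h2 : poch (d + p) (m - p) ≠ 0 := hdp p (m - p)
        have h3 : ((m - p).factorial : ℂ) ≠ 0 := by
          exact_mod_cast Nat.factorial_ne_zero (m - p)
        have h4 : (m.descFactorial p : ℂ) ≠ 0 :=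
          Nat.cast_ne_zero.mpr (fun h0 => by
            have := Nat.descFactorial_eq_zero_iff_lt.mp h0; omega)
        have h4' : (m.descFactorial p : ℂ) * (m.descFactorial p : ℂ)⁻¹ = 1 := mul_inv_cancel₀ h4
        simp only [div_eq_mul_inv, mul_inv]
        linear_combination (-((-1:ℂ)^p * z^p * (n.choose p : ℂ) * poch (1 - a) (n - p) * (poch b p * poch c p * (poch d p)⁻¹) * (poch (b+p) (m-p) * poch (c+p) (m-p) * (poch (d+p) (m-p))⁻¹ * (((m-p).factorial : ℂ))⁻¹ * z^(m-p)))) * h4'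
      · rw [hypF, if_neg hpm, poch_neg_nat,
          Nat.descFactorial_eq_zero_iff_lt.mpr (by omega)]
        simp
    rw [Finset.sum_congr rfl hterm, ← Finset.mul_sum]
    have hvan : ∑ p ∈ Finset.range (n + 1),
        (n.choose p : ℂ) * poch (1 - a) (n - p) * poch (-(m:ℂ)) p = poch (1 - a - m) n := by
      have h := poch_vandermonde (-(m:ℂ)) (1 - a) n
      rw [show -(m:ℂ) + (1 - a) = 1 - a - m by ring] at h
      rw [h]
      apply Finset.sum_congr rfl
      intro p _
      ring
    rw [hvan]
    have hA' : poch (1 - a - (m:ℂ)) n = poch (1 - a) n * poch a m / poch (a - n) m := by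
      rw [eq_div_iff (han m)]
      exact poch_keyA a n m
    rw [hA']
    have h5 : (Nat.factorial m : ℂ) ≠ 0 := by exact_mod_cast Nat.factorial_ne_zero m
    field_simp
  -- assembly
  calc ∑' k : ℕ, poch a k * poch b k * poch c k /
        (poch (a - n) k * poch d k * (Nat.factorial k : ℂ)) * z ^ k
      = ∑' m : ℕ, (poch (1 - a) n)⁻¹ * ∑ p ∈ Finset.range (n + 1), hypF a b c d z n p m :=
        tsum_congr key
    _ = (poch (1 - a) n)⁻¹ * ∑' m : ℕ, ∑ p ∈ Finset.range (n + 1), hypF a b c d z n p m :=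
        tsum_mul_left
    _ = (poch (1 - a) n)⁻¹ * ∑ p ∈ Finset.range (n + 1), ∑' m : ℕ, hypF a b c d z n p m := by
        rw [Summable.tsum_finsetSum (fun p _ => hFsum p)]
    _ = (1 / poch (1 - a) n) *
        ∑ p ∈ Finset.range (n + 1), (-z) ^ p * (n.choose p : ℂ) * poch (1 - a) (n - p) *
          (poch b p * poch c p / poch d p) *
          ∑' k : ℕ, poch (b + p) k * poch (c + p) k /
            (poch (d + p) k * (Nat.factorial k : ℂ)) * z ^ k := by
        rw [one_div]
        congr 1
        apply Finset.sum_congr rfl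
        intro p _
        rw [hshift p]
        rfl
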